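/- Let q ≥ 1 and m be integers. Then e(m/q) = ∑_{d | m, d | q} φ(q/d)^{-1} ∑_{χ mod q/d} τ(χ̄) χ(m/d), where the inner sum is over all Dirichlet characters χ to the modulus q/d. -/

import Mathlib

open Complex

/-- `e(x) = e^{2πix}`. -/
noncomputable def e (x : ℝ) : ℂ := Complex.exp (2 * Real.pi * Complex.I * x)

/-- The Gauss sum `τ(χ) = ∑_{b mod n} χ(b) e(b/n)` of a Dirichlet character mod `n`. -/
noncomputable def gaussTau {n : ℕ} (χ : DirichletCharacter ℂ n) : ℂ :=
  ∑ b ∈ Finset.range n, χ b * e ((b : ℝ) / (n : ℝ))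

lemma e_add_int (x : ℝ) (k : ℤ) : e (x + k) = e x := by
  unfold e
  rw [Complex.ofReal_add, mul_add, Complex.exp_add]
  have h : (2 * (Real.pi : ℂ) * Complex.I * ((k : ℝ) : ℂ)) = (k : ℂ) * (2 * Real.pi * Complex.I) := by
    push_cast; ring
  rw [h, Complex.exp_int_mul_two_pi_mul_I, mul_one]

lemma isUnit_intCast_iff {n : ℕ} [NeZero n] (a : ℤ) :
    IsUnit ((a : ZMod n)) ↔ Int.gcd a n = 1 := by
  constructor
  · rintro ⟨u, hu⟩
    have h1 : (a : ZMod n) * ((u⁻¹ : (ZMod n)ˣ) : ZMod n) = 1 := by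
      rw [← hu]; exact u.mul_inv
    set b : ℕ := ((u⁻¹ : (ZMod n)ˣ) : ZMod n).val with hbdef
    have hb : ((b : ℕ) : ZMod n) = ((u⁻¹ : (ZMod n)ˣ) : ZMod n) :=
      ZMod.natCast_rightInverse _
    have h2 : ((a * b - 1 : ℤ) : ZMod n) = 0 := by
      push_cast
      rw [hb, h1, sub_self]
    rw [ZMod.intCast_zmod_eq_zero_iff_dvd] at h2
    obtain ⟨k, hk⟩ := h2
    have hcop : IsCoprime a (n : ℤ) := ⟨(b : ℤ), -k, by linarith⟩
    exact Int.isCoprime_iff_gcd_eq_one.mp hcop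
  · intro h
    obtain ⟨u, v, huv⟩ := Int.isCoprime_iff_gcd_eq_one.mpr h
    refine IsUnit.of_mul_eq_one ((u : ℤ) : ZMod n) ?_
    have h2 := congrArg (fun x : ℤ => (x : ZMod n)) huv
    push_cast at h2
    rwa [ZMod.natCast_self, mul_zero, add_zero, mul_comm] at h2

lemma key (n : ℕ) [NeZero n] (a : ℤ) :
    ((n.totient : ℂ))⁻¹ *
        ∑ χ : DirichletCharacter ℂ n,
          gaussTau (χ.ringHomComp (starRingEnd ℂ)) * χ ((a : ZMod n)) =
      if Int.gcd a (n : ℕ) = 1 then e ((a : ℝ) / (n : ℝ)) else 0 := by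
  have htot : (n.totient : ℂ) ≠ 0 := by
    exact_mod_cast Nat.cast_ne_zero.mpr (Nat.totient_pos.mpr (Nat.pos_of_ne_zero (NeZero.ne n))).ne'
  have hswap : ∑ χ : DirichletCharacter ℂ n,
      gaussTau (χ.ringHomComp (starRingEnd ℂ)) * χ ((a : ZMod n)) =
      ∑ b ∈ Finset.range n, e ((b : ℝ) / (n : ℝ)) *
        ∑ χ : DirichletCharacter ℂ n, (starRingEnd ℂ) (χ b) * χ ((a : ZMod n)) := by
    unfold gaussTau
    simp_rw [Finset.sum_mul, Finset.mul_sum]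
    rw [Finset.sum_comm]
    refine Finset.sum_congr rfl fun b _ => Finset.sum_congr rfl fun χ _ => ?_
    rw [MulChar.ringHomComp_apply]
    ring
  have horth : ∀ b : ℕ,
      (∑ χ : DirichletCharacter ℂ n, (starRingEnd ℂ) (χ b) * χ ((a : ZMod n))) =
      if IsUnit ((b : ℕ) : ZMod n) ∧ ((b : ℕ) : ZMod n) = (a : ZMod n)
        then (n.totient : ℂ) else 0 := by
    intro b
    by_cases hb : IsUnit ((b : ℕ) : ZMod n)
    · have hconj : ∀ χ : DirichletCharacter ℂ n,
          (starRingEnd ℂ) (χ b) = χ (((b : ℕ) : ZMod n))⁻¹ := by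
        intro χ
        have h1 : ‖χ ((b : ℕ) : ZMod n)‖ = 1 := by
          simpa using χ.unit_norm_eq_one hb.unit
        have h2 : χ (((b : ℕ) : ZMod n))⁻¹ * χ ((b : ℕ) : ZMod n) = 1 := by
          rw [← map_mul, ZMod.inv_mul_of_unit _ hb, map_one]
        rw [← RCLike.inv_eq_conj h1]
        exact (eq_inv_of_mul_eq_one_left h2).symm
      simp_rw [hconj]
      rw [DirichletCharacter.sum_char_inv_mul_char_eq ℂ hb ((a : ZMod n))]
      simp [hb]
    · rw [if_neg (by tauto)]
      refine Finset.sum_eq_zero fun χ _ => ?_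
      rw [MulChar.map_nonunit χ hb, map_zero, zero_mul]
  rw [hswap]
  simp_rw [horth]
  by_cases ha' : Int.gcd a (n : ℕ) = 1
  · have ha : IsUnit ((a : ZMod n)) := (isUnit_intCast_iff a).mpr ha'
    rw [if_pos ha']
    set b0 : ℕ := ((a : ZMod n)).val with hb0def
    have hb0lt : b0 < n := ZMod.val_lt _
    have hb0cast : ((b0 : ℕ) : ZMod n) = (a : ZMod n) := ZMod.natCast_rightInverse _
    rw [Finset.sum_eq_single b0]
    · rw [if_pos ⟨hb0cast ▸ ha, hb0cast⟩]
      have hdvd : (n : ℤ) ∣ a - (b0 : ℤ) := by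
        rw [← ZMod.intCast_zmod_eq_zero_iff_dvd]
        push_cast
        rw [hb0cast, sub_self]
      obtain ⟨k, hk⟩ := hdvd
      have hn0 : (n : ℝ) ≠ 0 := Nat.cast_ne_zero.mpr (NeZero.ne n)
      have harg : (a : ℝ) / (n : ℝ) = (b0 : ℝ) / (n : ℝ) + (k : ℤ) := by
        have : (a : ℝ) = (b0 : ℝ) + (n : ℝ) * (k : ℝ) := by exact_mod_cast congrArg (Int.cast : ℤ → ℝ) (by linarith [hk] : a = (b0 : ℤ) + n * k)
        rw [this]
        field_simp
      rw [harg, e_add_int]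
      field_simp
    · intro b hbmem hbne
      rw [if_neg, mul_zero]
      rintro ⟨-, heq⟩
      apply hbne
      have := congrArg ZMod.val heq
      rwa [ZMod.val_cast_of_lt (Finset.mem_range.mp hbmem)] at this
    · intro h
      exact absurd (Finset.mem_range.mpr hb0lt) h
  · have ha : ¬ IsUnit ((a : ZMod n)) := fun h => ha' ((isUnit_intCast_iff a).mp h)
    rw [if_neg ha']
    rw [Finset.sum_eq_zero, mul_zero]
    intro b _
    rw [if_neg, mul_zero]
    rintro ⟨hbu, hbeq⟩
    exact ha (hbeq ▸ hbu)

/-- For integers `q ≥ 1` and `m`,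
`e(m/q) = ∑_{d | m, d | q} φ(q/d)⁻¹ ∑_{χ mod q/d} τ(χ̄) χ(m/d)`. -/
theorem exp_div_eq_sum_characters (q : ℕ) (hq : 1 ≤ q) (m : ℤ) :
    e ((m : ℝ) / (q : ℝ)) =
      ∑ d ∈ q.divisors.filter (fun d : ℕ => (d : ℤ) ∣ m),
        ((q / d).totient : ℂ)⁻¹ *
          ∑ χ : DirichletCharacter ℂ (q / d),
            gaussTau (χ.ringHomComp (starRingEnd ℂ)) * χ (((m / (d : ℤ)) : ℤ) : ZMod (q / d)) := by
  have hq0 : q ≠ 0 := by omega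
  set g : ℕ := Int.gcd m q with hgdef
  have hgm : (g : ℤ) ∣ m := Int.gcd_dvd_left _ _
  have hgqZ : (g : ℤ) ∣ (q : ℤ) := Int.gcd_dvd_right _ _
  have hgq : g ∣ q := Int.natCast_dvd_natCast.mp hgqZ
  have hg0 : g ≠ 0 := by
    intro h
    exact hq0 (by simpa using (Int.gcd_eq_zero_iff.mp h).2)
  have hNeZero : ∀ d : ℕ, d ∈ q.divisors.filter (fun d : ℕ => (d : ℤ) ∣ m) → q / d ≠ 0 := by
    intro d hd
    obtain ⟨hd1, hd2⟩ := Finset.mem_filter.mp hd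
    obtain ⟨hdq, -⟩ := Nat.mem_divisors.mp hd1
    exact (Nat.div_pos (Nat.le_of_dvd (Nat.pos_of_ne_zero hq0) hdq)
      (Nat.pos_of_mem_divisors hd1)).ne'
  have hsum : ∑ d ∈ q.divisors.filter (fun d : ℕ => (d : ℤ) ∣ m),
        ((q / d).totient : ℂ)⁻¹ *
          ∑ χ : DirichletCharacter ℂ (q / d),
            gaussTau (χ.ringHomComp (starRingEnd ℂ)) * χ (((m / (d : ℤ)) : ℤ) : ZMod (q / d)) =
      ∑ d ∈ q.divisors.filter (fun d : ℕ => (d : ℤ) ∣ m),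
        if Int.gcd (m / (d : ℤ)) ((q / d : ℕ) : ℕ) = 1
          then e (((m / (d : ℤ) : ℤ) : ℝ) / ((q / d : ℕ) : ℝ)) else 0 := by
    refine Finset.sum_congr rfl fun d hd => ?_
    haveI : NeZero (q / d) := ⟨hNeZero d hd⟩
    exact key (q / d) (m / (d : ℤ))
  rw [hsum, Finset.sum_eq_single g]
  · have hunit : Int.gcd (m / (g : ℤ)) ((q / g : ℕ) : ℕ) = 1 := by
      have h1 : ((q / g : ℕ) : ℤ) = (q : ℤ) / (g : ℤ) := Int.natCast_ediv q g
      rw [h1, hgdef]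
      exact Int.gcd_div_gcd_div_gcd (Nat.pos_of_ne_zero hg0)
    rw [if_pos hunit]
    congr 1
    have hgR : (g : ℝ) ≠ 0 := Nat.cast_ne_zero.mpr hg0
    have hqR : (q : ℝ) ≠ 0 := Nat.cast_ne_zero.mpr hq0
    obtain ⟨m', hm'⟩ := hgm
    obtain ⟨q', hq'⟩ := hgq
    have hgZ : (g : ℤ) ≠ 0 := Int.natCast_ne_zero.mpr hg0
    have h2 : m / (g : ℤ) = m' := by rw [hm', Int.mul_ediv_cancel_left _ hgZ]
    have h3 : q / g = q' := by rw [hq', Nat.mul_div_cancel_left _ (Nat.pos_of_ne_zero hg0)]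
    rw [h2, h3, hm', hq']
    push_cast
    rw [mul_div_mul_left _ _ hgR]
  · intro d hd hdg
    obtain ⟨hd1, hd2⟩ := Finset.mem_filter.mp hd
    obtain ⟨hdq, -⟩ := Nat.mem_divisors.mp hd1
    have hd0 : d ≠ 0 := (Nat.pos_of_mem_divisors hd1).ne'
    have hdZ : (d : ℤ) ≠ 0 := Int.natCast_ne_zero.mpr hd0
    rw [if_neg]
    intro hunit
    -- d divides g
    have hdg' : (d : ℤ) ∣ (g : ℤ) := Int.dvd_coe_gcd hd2 (Int.natCast_dvd_natCast.mpr hdq)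
    -- g/d divides m/d and q/d
    have h4 : (g : ℤ) / (d : ℤ) ∣ m / (d : ℤ) := Int.ediv_dvd_ediv hdg' hgm
    have h5 : (g : ℤ) / (d : ℤ) ∣ (q : ℤ) / (d : ℤ) := Int.ediv_dvd_ediv hdg' hgqZ
    have h6 : ((q / d : ℕ) : ℤ) = (q : ℤ) / (d : ℤ) := Int.natCast_ediv q d
    have h7 : (g : ℤ) / (d : ℤ) ∣ (Int.gcd (m / (d : ℤ)) ((q / d : ℕ)) : ℤ) := by
      refine Int.dvd_coe_gcd h4 ?_
      rw [h6]; exact h5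
    rw [hunit] at h7
    have h7' : (g : ℤ) / (d : ℤ) ∣ (1 : ℤ) := by exact_mod_cast h7
    have h8 : (g : ℤ) / (d : ℤ) = 1 := by
      rcases Int.isUnit_iff.mp (isUnit_of_dvd_one h7') with h | h
      · exact h
      · exfalso
        have : 0 ≤ (g : ℤ) / (d : ℤ) := Int.ediv_nonneg (Int.natCast_nonneg _) (Int.natCast_nonneg _)
        omega
    apply hdg
    have h9 : (g : ℤ) = (d : ℤ) := by
      obtain ⟨c, hc⟩ := hdg'
      rw [hc, Int.mul_ediv_cancel_left _ hdZ] at h8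
      rw [hc, h8, mul_one]
    exact_mod_cast h9.symm
  · intro h
    exact absurd (Finset.mem_filter.mpr ⟨Nat.mem_divisors.mpr ⟨hgq, hq0⟩, hgm⟩) h
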